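/- Let φ : L → L₀ be an epimorphism of finite modular lattices with smallest-preimage map σ, and let v ∈ L satisfy v = σ(φ(v)), v ≠ 0. Let v/w be a prime quotient of L and let r/s be a prime quotient in L₀ projective to φ(v)/φ(w). Set r̲ = σ(r) and s̲ = ⋁{u ∈ L : u ≤ r̲, φ(u) ≤ s}. Then r̲/s̲ is a prime quotient of L projective to v/w. -/
import Mathlib


/-- The quotient `q.1/q.2` transposes up to `r.1/r.2`. -/
def TransposedUp {β : Type*} [Lattice β] (q r : β × β) : Prop :=
  q.1 ⊔ r.2 = r.1 ∧ q.1 ⊓ r.2 = q.2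

/-- Projectivity of quotients: chain of transpositions. -/
def ProjectiveQuot {β : Type*} [Lattice β] (q r : β × β) : Prop :=
  Relation.ReflTransGen (fun a b => TransposedUp a b ∨ TransposedUp b a) q r

set_option linter.unusedSectionVars false

section Aux

variable {L L₀ : Type*} [Lattice L] [Fintype L] [OrderBot L] [IsModularLattice L]
  [Lattice L₀] [IsModularLattice L₀]
  (φ : LatticeHom L L₀) (σ : L₀ → L)

/-- Every subset of a finite lattice with bottom has a least upper bound. -/
lemma aux_exists_isLUB (S : Set L) : ∃ b : L, IsLUB S b := by
  classical
  have hfin : S.Finite := Set.toFinite S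
  refine ⟨hfin.toFinset.sup id, ?_, ?_⟩
  · intro x hx
    exact Finset.le_sup (f := id) (hfin.mem_toFinset.mpr hx)
  · intro ub hub
    exact Finset.sup_le fun x hx => hub (hfin.mem_toFinset.mp hx)

lemma aux_sigma_mono (hσ : ∀ y : L₀, IsLeast {x : L | φ x = y} (σ y))
    {p q : L₀} (h : p ≤ q) : σ p ≤ σ q := by
  have h1 : φ (σ p ⊓ σ q) = p := by
    rw [map_inf, (hσ p).1, (hσ q).1]
    exact inf_eq_left.mpr h
  exact le_trans ((hσ p).2 h1) inf_le_right

lemma aux_phi_bot_le (hφ : Function.Surjective φ) (y : L₀) : φ ⊥ ≤ y := by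
  obtain ⟨x, rfl⟩ := hφ y
  have : φ (⊥ ⊓ x) = φ ⊥ ⊓ φ x := map_inf φ ⊥ x
  rw [bot_inf_eq] at this
  rw [this]
  exact inf_le_right

lemma aux_lub_le_sigma (σ : L₀ → L) {p q : L₀} {b : L}
    (hb : IsLUB {u : L | u ≤ σ p ∧ φ u ≤ q} b) : b ≤ σ p :=
  hb.2 fun _ hu => hu.1

lemma aux_phi_lub (hφ : Function.Surjective φ)
    (hσ : ∀ y : L₀, IsLeast {x : L | φ x = y} (σ y))
    {p q : L₀} (hqp : q ≤ p) {b : L}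
    (hb : IsLUB {u : L | u ≤ σ p ∧ φ u ≤ q} b) : φ b = q := by
  classical
  set S : Set L := {u : L | u ≤ σ p ∧ φ u ≤ q} with hS
  have hfin : S.Finite := Set.toFinite S
  have hlub2 : IsLUB S (hfin.toFinset.sup id) := by
    constructor
    · intro x hx
      exact Finset.le_sup (f := id) (hfin.mem_toFinset.mpr hx)
    · intro ub hub
      exact Finset.sup_le fun x hx => hub (hfin.mem_toFinset.mp hx)
  have hbe : b = hfin.toFinset.sup id := hb.unique hlub2
  have hsub : ∀ F : Finset L, (∀ x ∈ F, φ x ≤ q) → φ (F.sup id) ≤ q := by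
    intro F
    induction F using Finset.cons_induction with
    | empty => intro _; simpa using aux_phi_bot_le φ hφ q
    | cons a F ha ih =>
        intro h
        rw [Finset.sup_cons, map_sup]
        exact sup_le (h a (Finset.mem_cons_self a F))
          (ih fun x hx => h x (Finset.mem_cons_of_mem hx))
  have hle : φ b ≤ q := by
    rw [hbe]
    exact hsub _ fun x hx => (hfin.mem_toFinset.mp hx).2
  have hmem : σ q ∈ S := ⟨aux_sigma_mono φ σ hσ hqp, le_of_eq ((hσ q).1)⟩
  have hge : q ≤ φ b := by
    have := hb.1 hmem
    calc q = φ (σ q) := ((hσ q).1).symm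
    _ ≤ φ b := φ.toSupHom.toFun_eq_coe ▸ (OrderHomClass.mono φ this)
  exact le_antisymm hle hge

/-- Covering lemma: the lifted quotient is prime. -/
lemma aux_cover (hφ : Function.Surjective φ)
    (hσ : ∀ y : L₀, IsLeast {x : L | φ x = y} (σ y))
    {p q : L₀} (hqp : q ⋖ p) {b : L}
    (hb : IsLUB {u : L | u ≤ σ p ∧ φ u ≤ q} b) : b ⋖ σ p := by
  have hbs : b ≤ σ p := aux_lub_le_sigma φ σ hb
  have hbφ : φ b = q := aux_phi_lub φ σ hφ hσ hqp.le hb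
  have hlt : b < σ p := lt_of_le_of_ne hbs (by
    intro h
    apply hqp.ne
    rw [← hbφ, h, (hσ p).1])
  refine ⟨hlt, ?_⟩
  intro c hc hca
  have h1 : q ≤ φ c := hbφ ▸ (OrderHomClass.mono φ hc.le)
  have h2 : φ c ≤ p := (hσ p).1 ▸ (OrderHomClass.mono φ hca.le)
  rcases hqp.eq_or_eq h1 h2 with h | h
  · -- φ c = q, so c is in the set, hence c ≤ b, contradiction
    exact absurd (hb.1 ⟨hca.le, h.le⟩) (not_le_of_gt hc)
  · -- φ c = p, so σ p ≤ c, contradiction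
    exact absurd ((hσ p).2 h) (not_le_of_gt hca)

/-- Transposition lifting lemma. -/
lemma aux_transpose (hφ : Function.Surjective φ)
    (hσ : ∀ y : L₀, IsLeast {x : L | φ x = y} (σ y))
    {p q p' q' : L₀} (hqp : q ⋖ p) (hqp' : q' ⋖ p')
    (ht : TransposedUp (p, q) (p', q')) {b b' : L}
    (hb : IsLUB {u : L | u ≤ σ p ∧ φ u ≤ q} b)
    (hb' : IsLUB {u : L | u ≤ σ p' ∧ φ u ≤ q'} b') :
    TransposedUp (σ p, b) (σ p', b') := by
  obtain ⟨ht1, ht2⟩ := ht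
  simp only at ht1 ht2
  have hpp' : p ≤ p' := ht1 ▸ le_sup_left
  have hqq' : q ≤ q' := ht2 ▸ inf_le_right
  have hbs : b ≤ σ p := aux_lub_le_sigma φ σ hb
  have hb's : b' ≤ σ p' := aux_lub_le_sigma φ σ hb'
  have hbφ : φ b = q := aux_phi_lub φ σ hφ hσ hqp.le hb
  have hb'φ : φ b' = q' := aux_phi_lub φ σ hφ hσ hqp'.le hb'
  have hbb' : b ≤ b' := hb.2 fun u hu =>
    hb'.1 ⟨le_trans hu.1 (aux_sigma_mono φ σ hσ hpp'), le_trans hu.2 hqq'⟩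
  -- a ⊓ b' = b
  have hinf : σ p ⊓ b' = b := by
    refine le_antisymm (hb.1 ⟨inf_le_left, ?_⟩) (le_inf hbs hbb')
    have : φ (σ p ⊓ b') = p ⊓ q' := by rw [map_inf, (hσ p).1, hb'φ]
    rw [this, ht2]
  -- σ p' ≤ σ p ⊔ b'
  have hφsup : φ (σ p ⊔ b') = p' := by rw [map_sup, (hσ p).1, hb'φ, ht1]
  have ha' : σ p' ≤ σ p ⊔ b' := (hσ p').2 hφsup
  have hb'a' : b' ≤ σ p' := hb's
  -- key modular computation
  have hkey : σ p' = b' ⊔ (σ p ⊓ σ p') := by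
    have h1 : (b' ⊔ σ p) ⊓ σ p' = b' ⊔ (σ p ⊓ σ p') :=
      sup_inf_assoc_of_le (σ p) hb'a'
    have h2 : (b' ⊔ σ p) ⊓ σ p' = σ p' := by
      rw [sup_comm]
      exact inf_eq_right.mpr ha'
    rw [← h1, h2]
  have hbinf : b ≤ σ p ⊓ σ p' := le_inf hbs (le_trans hbb' hb's)
  rcases (aux_cover φ σ hφ hσ hqp hb).eq_or_eq hbinf inf_le_left with h | h
  · -- σ p ⊓ σ p' = b : contradiction
    exfalso
    have : σ p' = b' := by rw [hkey, h, sup_eq_left.mpr hbb']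
    apply hqp'.ne
    rw [← hb'φ, ← this, (hσ p').1]
  · -- σ p ⊓ σ p' = σ p : gives σ p ⊔ b' = σ p'
    have hle : σ p ≤ σ p' := inf_eq_left.mp h
    have : σ p ⊔ b' ≤ σ p' := sup_le hle hb's
    exact ⟨le_antisymm this ha', hinf⟩

end Aux

/-- Let `φ : L → L₀` be an epimorphism of finite modular lattices with
smallest-preimage map `σ`, and `v = σ(φ v)`, `v ≠ 0`. Given a prime quotient `v/w`
and a prime quotient `r/s` of `L₀` projective to `φv/φw`, setting `r̲ = σ r` and
`s̲ = ⋁{u : u ≤ r̲, φ u ≤ s}`, the quotient `r̲/s̲` is prime and projective to `v/w`. -/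
theorem stmt_9 {L L₀ : Type*} [Lattice L] [Fintype L] [OrderBot L] [IsModularLattice L]
    [Lattice L₀] [Fintype L₀] [IsModularLattice L₀]
    (φ : LatticeHom L L₀) (hφ : Function.Surjective φ)
    (σ : L₀ → L) (hσ : ∀ y : L₀, IsLeast {x : L | φ x = y} (σ y))
    (v : L) (hv : v = σ (φ v)) (hv0 : v ≠ ⊥)
    (w : L) (hw : w ⋖ v)
    (r s : L₀) (hrs : s ⋖ r)
    (hproj : ProjectiveQuot (r, s) (φ v, φ w))
    (sb : L) (hsb : IsLUB {u : L | u ≤ σ r ∧ φ u ≤ s} sb) :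
    sb ⋖ σ r ∧ ProjectiveQuot (σ r, sb) (v, w) := by
  classical
  -- canonical lift of a quotient of L₀
  let lb : L₀ × L₀ → L := fun x =>
    Classical.choose (aux_exists_isLUB {u : L | u ≤ σ x.1 ∧ φ u ≤ x.2})
  have hlb : ∀ x : L₀ × L₀, IsLUB {u : L | u ≤ σ x.1 ∧ φ u ≤ x.2} (lb x) :=
    fun x => Classical.choose_spec _
  let Lf : L₀ × L₀ → L × L := fun x => (σ x.1, lb x)
  -- inductive lifting of projectivity
  have main : ∀ x : L₀ × L₀,
      Relation.ReflTransGen (fun a b => TransposedUp a b ∨ TransposedUp b a) (r, s) x →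
      x.2 ⋖ x.1 ∧ ProjectiveQuot (Lf (r, s)) (Lf x) := by
    intro x hx
    induction hx with
    | refl => exact ⟨hrs, Relation.ReflTransGen.refl⟩
    | @tail y z hyz hstep ih =>
        obtain ⟨hyprime, hyproj⟩ := ih
        rcases hstep with h | h
        · -- y transposes up to z
          have hzprime : z.2 ⋖ z.1 := by
            have := h.2 ▸ hyprime
            have h2 := CovBy.sup_of_inf_left this
            rwa [h.1] at h2
          have hT : TransposedUp (Lf y) (Lf z) := by
            have := aux_transpose φ σ hφ hσ hyprime hzprime
              (by simpa using h) (hlb y) (hlb z)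
            simpa using this
          exact ⟨hzprime, hyproj.tail (Or.inl hT)⟩
        · -- z transposes up to y
          have hzprime : z.2 ⋖ z.1 := by
            have h1 : y.2 ⋖ z.1 ⊔ y.2 := by rw [h.1]; exact hyprime
            have h2 := inf_covBy_of_covBy_sup_right h1
            rwa [h.2] at h2
          have hT : TransposedUp (Lf z) (Lf y) := by
            have := aux_transpose φ σ hφ hσ hzprime hyprime
              (by simpa using h) (hlb z) (hlb y)
            simpa using this
          exact ⟨hzprime, hyproj.tail (Or.inr hT)⟩
  obtain ⟨hend, hliftproj⟩ := main (φ v, φ w) hproj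
  -- identify Lf (r,s) with (σ r, sb)
  have hsb' : lb (r, s) = sb := (hlb (r, s)).unique hsb
  -- identify Lf (φ v, φ w) with (v, w)
  have hww : φ w < φ v := by
    refine lt_of_le_of_ne (OrderHomClass.mono φ hw.le) ?_
    intro h
    have : v ≤ w := by
      rw [hv, ← h]
      exact (hσ (φ w)).2 rfl
    exact absurd this (not_le_of_gt hw.lt)
  have hwlift : lb (φ v, φ w) = w := by
    have hb := hlb (φ v, φ w)
    have hbv : lb (φ v, φ w) ≤ v := by
      have := aux_lub_le_sigma φ σ hb
      rwa [← hv] at this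
    have hwb : w ≤ lb (φ v, φ w) := hb.1 ⟨hv ▸ hw.le, le_refl _⟩
    rcases hw.eq_or_eq hwb hbv with h | h
    · exact h
    · exfalso
      have hφb : φ (lb (φ v, φ w)) = φ w :=
        aux_phi_lub φ σ hφ hσ hww.le hb
      rw [h] at hφb
      exact absurd hφb.le (not_le_of_gt hww)
  constructor
  · have := aux_cover φ σ hφ hσ hrs hsb
    exact this
  · have : Lf (r, s) = (σ r, sb) := by simp [Lf, hsb']
    rw [this] at hliftproj
    have h2 : Lf (φ v, φ w) = (v, w) := by simp [Lf, hwlift, ← hv]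
    rwa [h2] at hliftproj
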